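/- The function F(c) = inf over positive integers t of (t!)^{1/t} · 15^{c/t} / c satisfies F(c) → log 15 as c → ∞ (where log denotes the natural logarithm). -/

import Mathlib

open Filter

noncomputable section

/-- An `n × n` 0-1 matrix `A` contains the `k × k` pattern `P` if there are strictly
increasing rows and columns selecting a submatrix that dominates `P`. -/
def Contains {k n : ℕ} (P : Matrix (Fin k) (Fin k) Bool)
    (A : Matrix (Fin n) (Fin n) Bool) : Prop :=
  ∃ r : Fin k → Fin n, ∃ c : Fin k → Fin n,
    StrictMono r ∧ StrictMono c ∧ ∀ i j, P i j = true → A (r i) (c j) = true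

/-- `A` avoids the pattern `P`. -/
def Avoids {k n : ℕ} (P : Matrix (Fin k) (Fin k) Bool)
    (A : Matrix (Fin n) (Fin n) Bool) : Prop := ¬ Contains P A

/-- The permutation matrix of a permutation. -/
def permMatrix {n : ℕ} (σ : Equiv.Perm (Fin n)) : Matrix (Fin n) (Fin n) Bool :=
  fun i j => decide (σ i = j)

/-- `A` is a permutation matrix. -/
def IsPermMatrix {n : ℕ} (A : Matrix (Fin n) (Fin n) Bool) : Prop :=
  ∃ σ : Equiv.Perm (Fin n), A = permMatrix σ

/-- Number of ones of a 0-1 matrix. -/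
def numOnes {m n : ℕ} (A : Matrix (Fin m) (Fin n) Bool) : ℕ :=
  (Finset.univ.filter fun p : Fin m × Fin n => A p.1 p.2 = true).card

/-- `SW P n = S_P(n)`, the number of `n × n` permutation matrices avoiding `P`. -/
def SW {k : ℕ} (P : Matrix (Fin k) (Fin k) Bool) (n : ℕ) : ℕ :=
  Nat.card {A : Matrix (Fin n) (Fin n) Bool // IsPermMatrix A ∧ Avoids P A}

/-- `exFH P n = ex(n, P)`, the maximum number of ones in an `n × n` 0-1 matrix
avoiding `P`. -/
def exFH {k : ℕ} (P : Matrix (Fin k) (Fin k) Bool) (n : ℕ) : ℕ :=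
  sSup {m : ℕ | ∃ A : Matrix (Fin n) (Fin n) Bool, Avoids P A ∧ numOnes A = m}

/-- `F c = inf over positive integers t of (t!)^(1/t) * 15^(c/t) / c`. -/
def F (c : ℝ) : ℝ :=
  ⨅ t : ℕ+, ((t : ℕ).factorial : ℝ) ^ ((1 : ℝ) / (t : ℕ)) * (15 : ℝ) ^ (c / (t : ℕ)) / c

/-- The block (among `n` consecutive blocks of length `t`) containing a given
index of `Fin (t * n)`. -/
def blockOf {t n : ℕ} (ht : 0 < t) (i : Fin (t * n)) : Fin n :=
  ⟨(i : ℕ) / t, by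
    rw [Nat.div_lt_iff_lt_mul ht]
    exact lt_of_lt_of_le i.isLt (le_of_eq (mul_comm t n))⟩

/-- The `t`-contraction of an `(t*n) × (t*n)` 0-1 matrix: entry `(a,b)` is 1 iff
the block `I_a × I_b` contains a one. -/
def contMat {t n : ℕ} (ht : 0 < t) (A : Matrix (Fin (t * n)) (Fin (t * n)) Bool) :
    Matrix (Fin n) (Fin n) Bool :=
  fun a b => @decide (∃ i j, blockOf ht i = a ∧ blockOf ht j = b ∧ A i j = true)
    (@Fintype.decidableExistsFintype _ _ (fun i => @Fintype.decidableExistsFintype _ _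
      (fun j => instDecidableAnd) _) _)

end

section FHelpers
open Real Filter

lemma one_le_stirling (n : ℕ) (hn : 0 < n) : 1 ≤ Stirling.stirlingSeq n := by
  obtain ⟨m, rfl⟩ := Nat.exists_eq_succ_of_ne_zero hn.ne'
  have hpos := Stirling.stirlingSeq'_pos m
  have htend : Tendsto (Real.log ∘ Stirling.stirlingSeq ∘ Nat.succ) atTop
      (nhds (Real.log (Real.sqrt π))) := by
    have h1 : Tendsto (Stirling.stirlingSeq ∘ Nat.succ) atTop (nhds (Real.sqrt π)) :=
      Stirling.tendsto_stirlingSeq_sqrt_pi.comp (tendsto_add_atTop_nat 1)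
    exact ((Real.continuousAt_log (by positivity)).tendsto).comp h1
  have h := Stirling.log_stirlingSeq'_antitone.le_of_tendsto htend m
  have hsp : (1:ℝ) ≤ Real.sqrt π := by
    rw [show (1:ℝ) = Real.sqrt 1 by simp]
    exact Real.sqrt_le_sqrt (by linarith [Real.pi_gt_three])
  have := (Real.log_le_log_iff (by positivity) hpos).mp h
  linarith

lemma stirling_le (n : ℕ) (hn : 0 < n) : Stirling.stirlingSeq n ≤ Real.exp 1 / Real.sqrt 2 := by
  obtain ⟨m, rfl⟩ := Nat.exists_eq_succ_of_ne_zero hn.ne'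
  have hpos := Stirling.stirlingSeq'_pos m
  have hpos0 := Stirling.stirlingSeq'_pos 0
  have h := Stirling.log_stirlingSeq'_antitone (Nat.zero_le m)
  have := (Real.log_le_log_iff hpos hpos0).mp h
  simpa [Stirling.stirlingSeq_one] using this

lemma fact_eq (n : ℕ) (hn : 0 < n) : (n.factorial : ℝ) =
    Stirling.stirlingSeq n * (Real.sqrt (2*n) * ((n:ℝ)/Real.exp 1)^n) := by
  have hn' : (0:ℝ) < n := by exact_mod_cast hn
  rw [Stirling.stirlingSeq, div_mul_cancel₀]
  positivity

lemma fact_lower (n : ℕ) (hn : 0 < n) : ((n:ℝ)/Real.exp 1)^n ≤ n.factorial := by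
  have hn' : (0:ℝ) < n := by exact_mod_cast hn
  rw [fact_eq n hn]
  have h1 := one_le_stirling n hn
  have h2 : (1:ℝ) ≤ Real.sqrt (2*n) := by
    rw [show (1:ℝ) = Real.sqrt 1 by simp]
    have : (1:ℝ) ≤ n := by exact_mod_cast hn
    exact Real.sqrt_le_sqrt (by linarith)
  have h3 : (0:ℝ) ≤ ((n:ℝ)/Real.exp 1)^n := by positivity
  calc ((n:ℝ)/Real.exp 1)^n = 1 * (1 * ((n:ℝ)/Real.exp 1)^n) := by ring
    _ ≤ Stirling.stirlingSeq n * (Real.sqrt (2*n) * ((n:ℝ)/Real.exp 1)^n) := by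
        gcongr

lemma fact_upper (n : ℕ) (hn : 0 < n) :
    (n.factorial : ℝ) ≤ Real.exp 1 * n * ((n:ℝ)/Real.exp 1)^n := by
  have hn' : (1:ℝ) ≤ n := by exact_mod_cast hn
  rw [fact_eq n hn]
  have h1 := stirling_le n hn
  have h2 : Real.sqrt (2*n) = Real.sqrt 2 * Real.sqrt n := by
    rw [← Real.sqrt_mul (by norm_num)]
  have h3 : (0:ℝ) ≤ ((n:ℝ)/Real.exp 1)^n := by positivity
  have h4 : Real.sqrt n ≤ n := by
    calc Real.sqrt n ≤ Real.sqrt ((n:ℝ)^2) := Real.sqrt_le_sqrt (by nlinarith)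
      _ = n := Real.sqrt_sq (by positivity)
  have hs2 : (0:ℝ) < Real.sqrt 2 := by positivity
  have hs : 0 < Stirling.stirlingSeq n := by
    obtain ⟨m, rfl⟩ := Nat.exists_eq_succ_of_ne_zero hn.ne'
    exact Stirling.stirlingSeq'_pos m
  calc Stirling.stirlingSeq n * (Real.sqrt (2*n) * ((n:ℝ)/Real.exp 1)^n)
      = (Stirling.stirlingSeq n * Real.sqrt 2) * (Real.sqrt n * ((n:ℝ)/Real.exp 1)^n) := by
        rw [h2]; ring
    _ ≤ ((Real.exp 1 / Real.sqrt 2) * Real.sqrt 2) * ((n:ℝ) * ((n:ℝ)/Real.exp 1)^n) := by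
        gcongr
    _ = Real.exp 1 * n * ((n:ℝ)/Real.exp 1)^n := by
        rw [div_mul_cancel₀ _ hs2.ne']; ring

open Real in
lemma fact_rpow_lower (n : ℕ) (hn : 0 < n) :
    (n:ℝ)/Real.exp 1 ≤ ((n.factorial:ℝ)) ^ ((1:ℝ)/n) := by
  have hn' : ((n:ℝ)) ≠ 0 := by exact_mod_cast hn.ne'
  have hb : (0:ℝ) ≤ (n:ℝ)/Real.exp 1 := by positivity
  have h := Real.rpow_le_rpow (by positivity) (fact_lower n hn) (by positivity : (0:ℝ) ≤ 1/(n:ℝ))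
  rwa [← Real.rpow_natCast ((n:ℝ)/Real.exp 1) n, ← Real.rpow_mul hb,
    mul_one_div, div_self hn', Real.rpow_one] at h

open Real in
lemma fact_rpow_upper (n : ℕ) (hn : 0 < n) :
    ((n.factorial:ℝ)) ^ ((1:ℝ)/n) ≤ (Real.exp 1 * n) ^ ((1:ℝ)/n) * ((n:ℝ)/Real.exp 1) := by
  have hn' : ((n:ℝ)) ≠ 0 := by exact_mod_cast hn.ne'
  have hb : (0:ℝ) ≤ (n:ℝ)/Real.exp 1 := by positivity
  have h := Real.rpow_le_rpow (by positivity) (fact_upper n hn) (by positivity : (0:ℝ) ≤ 1/(n:ℝ))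
  rwa [Real.mul_rpow (by positivity) (by positivity),
    ← Real.rpow_natCast ((n:ℝ)/Real.exp 1) n, ← Real.rpow_mul hb,
    mul_one_div, div_self hn', Real.rpow_one] at h

open Real in
lemma aux_F_lower (n : ℕ) (hn : 0 < n) (c : ℝ) (hc : 0 < c) :
    Real.log 15 ≤ ((n.factorial : ℝ)) ^ ((1:ℝ)/n) * (15:ℝ) ^ (c/n) / c := by
  have H := fact_rpow_lower n hn
  set L := Real.log 15 with hLdef
  have hL : 0 < L := Real.log_pos (by norm_num)
  have ht : (0:ℝ) < n := by exact_mod_cast hn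
  have h15 : (15:ℝ) ^ (c/(n:ℝ)) = Real.exp (c*L/n) := by
    rw [Real.rpow_def_of_pos (by norm_num : (0:ℝ) < 15)]
    ring_nf
    congr 1; rw [hLdef]; ring
  have hexp : Real.exp 1 * (c*L/n) ≤ Real.exp (c*L/n) := by
    have h1 := Real.add_one_le_exp (c*L/n - 1)
    rw [Real.exp_sub] at h1
    have h3 : c*L/n ≤ Real.exp (c*L/n) / Real.exp 1 := by linarith
    have h4 := (le_div_iff₀ (Real.exp_pos 1)).mp h3
    linarith
  rw [h15]
  have key : L = ((n:ℝ)/Real.exp 1) * (Real.exp 1 * (c*L/n)) / c := by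
    field_simp
  refine le_trans (le_of_eq key) ?_
  gcongr

open Real in
lemma aux_F_upper (c : ℝ) (hc : 1 ≤ c) :
    (((⌈c * Real.log 15⌉₊).factorial : ℝ)) ^ ((1:ℝ)/(⌈c * Real.log 15⌉₊:ℕ)) *
      (15:ℝ) ^ (c/(⌈c * Real.log 15⌉₊:ℕ)) / c ≤
    (Real.exp 1 * (⌈c * Real.log 15⌉₊:ℕ)) ^ ((1:ℝ)/(⌈c * Real.log 15⌉₊:ℕ)) *
      (Real.log 15 + 1/c) := by
  set L := Real.log 15 with hLdef
  have hL : 0 < L := Real.log_pos (by norm_num)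
  have hc0 : (0:ℝ) < c := by linarith
  set n := ⌈c * L⌉₊ with hndef
  have hn : 0 < n := Nat.ceil_pos.mpr (by positivity)
  have htn : (0:ℝ) < n := by exact_mod_cast hn
  have hcln : c * L ≤ n := Nat.le_ceil _
  have hnlt : (n:ℝ) < c * L + 1 := Nat.ceil_lt_add_one (by positivity)
  have h15 : (15:ℝ) ^ (c/(n:ℝ)) = Real.exp (c*L/n) := by
    rw [Real.rpow_def_of_pos (by norm_num : (0:ℝ) < 15)]
    ring_nf
    congr 1; rw [hLdef]; ring
  have hexple : Real.exp (c*L/n) ≤ Real.exp 1 :=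
    Real.exp_le_exp.mpr (by rw [div_le_one htn]; linarith)
  rw [h15]
  have hA : (0:ℝ) ≤ (Real.exp 1 * n) ^ ((1:ℝ)/n) := by positivity
  calc ((n.factorial:ℝ)) ^ ((1:ℝ)/n) * Real.exp (c*L/n) / c
      ≤ ((Real.exp 1 * n) ^ ((1:ℝ)/n) * ((n:ℝ)/Real.exp 1)) * Real.exp 1 / c := by
        gcongr
        · exact fact_rpow_upper n hn
    _ = (Real.exp 1 * n) ^ ((1:ℝ)/n) * ((n:ℝ)/c) := by
        field_simp
    _ ≤ (Real.exp 1 * n) ^ ((1:ℝ)/n) * (L + 1/c) := by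
        gcongr
        rw [div_le_iff₀ hc0]
        have heq : (L + 1/c) * c = c * L + 1 := by field_simp
        rw [heq]
        linarith

open Real in
lemma aux_tendsto_upper : Filter.Tendsto (fun c : ℝ =>
    (Real.exp 1 * ((⌈c * Real.log 15⌉₊ : ℕ) : ℝ)) ^ ((1:ℝ)/((⌈c * Real.log 15⌉₊ : ℕ):ℝ)) *
      (Real.log 15 + 1/c)) Filter.atTop (nhds (Real.log 15)) := by
  have hL : 0 < Real.log 15 := Real.log_pos (by norm_num)
  have hceil : Filter.Tendsto (fun c : ℝ => (⌈c * Real.log 15⌉₊ : ℕ)) Filter.atTop Filter.atTop :=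
    tendsto_nat_ceil_atTop.comp (Filter.Tendsto.atTop_mul_const hL Filter.tendsto_id)
  have hcast : Filter.Tendsto (fun c : ℝ => ((⌈c * Real.log 15⌉₊ : ℕ) : ℝ))
      Filter.atTop Filter.atTop := tendsto_natCast_atTop_atTop.comp hceil
  have hGfun : Filter.Tendsto (fun x : ℝ => (Real.exp 1 * x) ^ ((1:ℝ)/x))
      Filter.atTop (nhds 1) := by
    have h1 : Filter.Tendsto (fun x : ℝ => (Real.exp 1) ^ ((1:ℝ)/x)) Filter.atTop (nhds 1) := by
      have h0 : Filter.Tendsto (fun x : ℝ => (1:ℝ)/x) Filter.atTop (nhds 0) := by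
        simpa [one_div] using tendsto_inv_atTop_zero
      have h2 := (Real.continuous_exp.tendsto 0).comp h0
      simp only [Function.comp, Real.exp_zero] at h2
      refine h2.congr fun x => ?_
      simp [Function.comp, Real.exp_one_rpow]
    have h2 := tendsto_rpow_div
    have h3 := h1.mul h2
    rw [mul_one] at h3
    refine Filter.Tendsto.congr' ?_ h3
    filter_upwards [Filter.eventually_gt_atTop (0:ℝ)] with x hx
    rw [← Real.mul_rpow (Real.exp_pos 1).le hx.le]
  have hmain := hGfun.comp hcast
  have hadd : Filter.Tendsto (fun c : ℝ => Real.log 15 + 1/c) Filter.atTop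
      (nhds (Real.log 15)) := by
    have h0 : Filter.Tendsto (fun c : ℝ => (1:ℝ)/c) Filter.atTop (nhds 0) := by
      simpa [one_div] using tendsto_inv_atTop_zero
    simpa using tendsto_const_nhds.add h0
  have := hmain.mul hadd
  simpa using this

end FHelpers

theorem F_tendsto_log_fifteen :
    Tendsto F atTop (nhds (Real.log 15)) := by
  have hL : 0 < Real.log 15 := Real.log_pos (by norm_num)
  have hlow : ∀ᶠ c : ℝ in atTop, Real.log 15 ≤ F c := by
    filter_upwards [eventually_gt_atTop (0:ℝ)] with c hc
    exact le_ciInf fun t => aux_F_lower (t:ℕ) t.pos c hc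
  have hupp : ∀ᶠ c : ℝ in atTop, F c ≤
      (Real.exp 1 * ((⌈c * Real.log 15⌉₊ : ℕ) : ℝ)) ^ ((1:ℝ)/((⌈c * Real.log 15⌉₊ : ℕ):ℝ)) *
        (Real.log 15 + 1/c) := by
    filter_upwards [eventually_ge_atTop (1:ℝ)] with c hc
    have hc0 : (0:ℝ) < c := by linarith
    have hn : 0 < ⌈c * Real.log 15⌉₊ := Nat.ceil_pos.mpr (by positivity)
    have hbdd : BddBelow (Set.range fun t : ℕ+ =>
        (((t:ℕ).factorial : ℝ)) ^ ((1:ℝ)/(t:ℕ)) * (15:ℝ) ^ (c/(t:ℕ)) / c) := by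
      refine ⟨Real.log 15, ?_⟩
      rintro _ ⟨t, rfl⟩
      exact aux_F_lower (t:ℕ) t.pos c hc0
    calc F c ≤ _ := ciInf_le hbdd (⟨⌈c * Real.log 15⌉₊, hn⟩ : ℕ+)
      _ ≤ _ := aux_F_upper c hc
  exact tendsto_of_tendsto_of_tendsto_of_le_of_le' tendsto_const_nhds
    aux_tendsto_upper hlow hupp
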